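/- Let β be a Salem number of degree 4 with conjugates β1 = β, β2 = β^{-1}, β3, β4 = β3^{-1}, where |β3| = 1 and β3 is not a root of unity. Then the module of relations R_β = {m ∈ Z^4 : β1^{m1}β2^{m2}β3^{m3}β4^{m4} = 1} equals the Z-span of (1,1,0,0) and (0,0,1,1); in particular it has rank 2. -/

import Mathlib

/-- `β` is a quartic Salem number with conjugates `β, β⁻¹, γ, γ⁻¹`, where `|γ| = 1`,
`γ` is non-real and not a root of unity. -/
def IsSalemQuartic (β : ℝ) (γ : ℂ) : Prop :=
  1 < β ∧ ‖γ‖ = 1 ∧ γ.im ≠ 0 ∧ (∀ n : ℕ, 0 < n → γ ^ n ≠ 1) ∧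
  ∃ p : Polynomial ℤ, p.Monic ∧ Irreducible p ∧ p.natDegree = 4 ∧
    (p.map (Int.castRingHom ℂ)).roots = {(β : ℂ), (β : ℂ)⁻¹, γ, γ⁻¹}

lemma gamma_zpow_ne_one {γ : ℂ} (hγ : ∀ n : ℕ, 0 < n → γ ^ n ≠ 1) {k : ℤ} (hk : k ≠ 0) :
    γ ^ k ≠ 1 := by
  intro hone
  rcases lt_or_gt_of_ne hk with hneg | hpos
  · have : γ ^ (-k) = 1 := by
      rw [zpow_neg, hone, inv_one]
    have hk' : 0 < (-k).toNat := by omega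
    have := hγ (-k).toNat hk'
    rw [← zpow_natCast, Int.toNat_of_nonneg (by omega)] at this
    exact this ‹γ ^ (-k) = 1›
  · have hk' : 0 < k.toNat := by omega
    have := hγ k.toNat hk'
    rw [← zpow_natCast, Int.toNat_of_nonneg (by omega)] at this
    exact this hone

/-- The module of relations of a quartic Salem number is the `ℤ`-span of
`(1,1,0,0)` and `(0,0,1,1)`. -/
theorem salem_quartic_relations (β : ℝ) (γ : ℂ) (h : IsSalemQuartic β γ) :
    ∀ m1 m2 m3 m4 : ℤ,
      (β : ℂ) ^ m1 * ((β : ℂ)⁻¹) ^ m2 * γ ^ m3 * (γ⁻¹) ^ m4 = 1 ↔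
        ∃ s t : ℤ, m1 = s ∧ m2 = s ∧ m3 = t ∧ m4 = t := by
  obtain ⟨hβ, habs, _, hroot, _⟩ := h
  intro m1 m2 m3 m4
  have hβ0 : (0:ℝ) < β := lt_trans one_pos hβ
  have hβc : (β : ℂ) ≠ 0 := by exact_mod_cast hβ0.ne'
  have key : (β : ℂ) ^ m1 * ((β : ℂ)⁻¹) ^ m2 * γ ^ m3 * (γ⁻¹) ^ m4
      = (β : ℂ) ^ (m1 - m2) * γ ^ (m3 - m4) := by
    have hγc : γ ≠ 0 := by intro h0; simp [h0] at habs
    rw [inv_zpow, inv_zpow, ← zpow_neg, ← zpow_neg, ← zpow_add₀ hβc, mul_assoc,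
      ← zpow_add₀ hγc, ← sub_eq_add_neg, ← sub_eq_add_neg]
  constructor
  · intro heq
    rw [key] at heq
    -- take absolute values
    have habs' : ‖((β : ℂ) ^ (m1 - m2) * γ ^ (m3 - m4))‖ = 1 := by
      rw [heq]; simp
    rw [norm_mul, norm_zpow, norm_zpow, habs, one_zpow, mul_one,
      Complex.norm_real, Real.norm_eq_abs, abs_of_pos hβ0] at habs'
    have h12 : m1 - m2 = 0 := by
      by_contra hne
      have := zpow_right_injective₀ hβ0 hβ.ne'
      exact hne (by simpa using this (habs'.trans (zpow_zero β).symm))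
    have hγ1 : γ ^ (m3 - m4) = 1 := by
      rw [h12, zpow_zero, one_mul] at heq
      exact heq
    have h34 : m3 - m4 = 0 := by
      by_contra hne
      exact gamma_zpow_ne_one hroot hne hγ1
    exact ⟨m2, m4, by omega, rfl, by omega, rfl⟩
  · rintro ⟨s, t, rfl, rfl, rfl, rfl⟩
    rw [key]
    simp
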